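/- Let q ∈ ℕ, and for i ∈ {1,…,q} let C_i ∈ ℝ^{m×n}, y_i ∈ ℝ^m, M_i ∈ ℝ^{m×m} symmetric positive definite, and μ_i > 0 with μ_1 + ⋯ + μ_q = 1. Let ȳ ∈ ℝ^{qm} be the vertical stacking of the y_i, let C̄ ∈ ℝ^{qm×n} be the vertical stacking of the C_i, and let M̄ ∈ ℝ^{qm×qm} be the block-diagonal matrix whose i-th diagonal block is (1/μ_i)·M_i. Then every x ∈ ℝ^n satisfying (C_i x − y_i)ᵀ M_i⁻¹ (C_i x − y_i) ≤ 1 for all i ∈ {1,…,q} satisfies (C̄ x − ȳ)ᵀ M̄⁻¹ (C̄ x − ȳ) ≤ 1. -/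

import Mathlib

open Matrix

/-- The intermediate containment in the proof of Lemma 5 of the paper: any point in the
intersection of the elliptical cylinders `C(y_i, M_i, C_i)` satisfies the combined
stacked ellipsoidal inequality `(C̄x − ȳ)ᵀ M̄⁻¹ (C̄x − ȳ) ≤ 1`, where `M̄` is block
diagonal with blocks `(1/μ_i)·M_i` and `Σ μ_i = 1`. -/
theorem stacked_cylinder_containment {q m n : ℕ}
    (C : Fin q → Matrix (Fin m) (Fin n) ℝ)
    (y : Fin q → Fin m → ℝ)
    (M : Fin q → Matrix (Fin m) (Fin m) ℝ)
    (hM : ∀ i, (M i).PosDef)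
    (μ : Fin q → ℝ) (hμpos : ∀ i, 0 < μ i) (hμsum : ∑ i, μ i = 1)
    (Cbar : Matrix (Fin q × Fin m) (Fin n) ℝ)
    (hCbar : ∀ i j k, Cbar (i, j) k = C i j k)
    (ybar : Fin q × Fin m → ℝ)
    (hybar : ∀ i j, ybar (i, j) = y i j)
    (Mbar : Matrix (Fin q × Fin m) (Fin q × Fin m) ℝ)
    (hMbar : ∀ i j i' j', Mbar (i, j) (i', j') =
      if i = i' then (1 / μ i) * M i j j' else 0)
    (x : Fin n → ℝ)
    (hx : ∀ i, (C i *ᵥ x - y i) ⬝ᵥ ((M i)⁻¹ *ᵥ (C i *ᵥ x - y i)) ≤ 1) :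
    (Cbar *ᵥ x - ybar) ⬝ᵥ (Mbar⁻¹ *ᵥ (Cbar *ᵥ x - ybar)) ≤ 1 := by
  -- candidate inverse: block diagonal with blocks μ_i · (M_i)⁻¹
  set N : Matrix (Fin q × Fin m) (Fin q × Fin m) ℝ :=
    fun p p' => if p.1 = p'.1 then μ p.1 * (M p.1)⁻¹ p.2 p'.2 else 0 with hN
  have hμne : ∀ i, μ i ≠ 0 := fun i => (hμpos i).ne'
  have hinv : Mbar⁻¹ = N := by
    apply Matrix.inv_eq_right_inv
    ext ⟨i, j⟩ ⟨i', j'⟩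
    rw [Matrix.mul_apply]
    simp only [Matrix.mul_apply, Fintype.sum_prod_type, hN, hMbar]
    by_cases h : i = i'
    · subst h
      have : ∀ k l, (if i = k then 1 / μ i * M i j l else 0) *
          (if k = i then μ k * (M k)⁻¹ l j' else 0)
          = if k = i then (M i j l) * ((M i)⁻¹ l j') else 0 := by
        intro k l
        by_cases hk : k = i
        · subst hk
          rw [if_pos rfl, if_pos rfl]
          generalize (M k)⁻¹ l j' = a
          field_simp [hμne k]
          simp
        · simp [hk, Ne.symm hk]
      simp only [this]
      rw [Finset.sum_comm]
      simp only [Finset.sum_ite_eq' (Finset.univ : Finset (Fin q))]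
      have := Matrix.mul_nonsing_inv (M i) (isUnit_iff_ne_zero.mpr (hM i).det_pos.ne')
      have h2 := congrFun (congrFun this j) j'
      simp only [Matrix.mul_apply] at h2
      simp [h2, Matrix.one_apply]
    · have : ∀ k l, (if i = k then 1 / μ i * M i j l else 0) *
          (if k = i' then μ k * (M k)⁻¹ l j' else 0) = 0 := by
        intro k l
        by_cases hk : i = k
        · subst hk; simp [h]
        · simp [hk]
      simp only [this]
      simp [Matrix.one_apply, h]
  rw [hinv]
  set v : Fin q → Fin m → ℝ := fun i => C i *ᵥ x - y i with hv
  have hw : ∀ i j, (Cbar *ᵥ x - ybar) (i, j) = v i j := by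
    intro i j
    simp [hv, Matrix.mulVec, dotProduct, hCbar, hybar]
  have key : (Cbar *ᵥ x - ybar) ⬝ᵥ (N *ᵥ (Cbar *ᵥ x - ybar))
      = ∑ i, μ i * (v i ⬝ᵥ ((M i)⁻¹ *ᵥ v i)) := by
    simp only [dotProduct, fun k => show (N *ᵥ (Cbar *ᵥ x - ybar)) k = ∑ p, N k p * (Cbar *ᵥ x - ybar) p from rfl, Fintype.sum_prod_type]
    refine Finset.sum_congr rfl fun i _ => ?_
    rw [Finset.mul_sum]
    refine Finset.sum_congr rfl fun j _ => ?_
    rw [hw]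
    have : ∑ k, ∑ l, N (i, j) (k, l) * (Cbar *ᵥ x - ybar) (k, l)
        = μ i * ∑ j', (M i)⁻¹ j j' * v i j' := by
      rw [Finset.mul_sum, ← Finset.sum_subset (Finset.subset_univ {i})]
      · simp [hN, hw, Finset.mul_sum, mul_assoc]
      · intro k _ hk
        simp only [Finset.mem_singleton] at hk
        simp [hN, Ne.symm hk]
    rw [this]; simp only [Matrix.mulVec, dotProduct]; ring
  rw [key, ← hμsum]
  apply Finset.sum_le_sum
  intro i _
  calc μ i * (v i ⬝ᵥ ((M i)⁻¹ *ᵥ v i)) ≤ μ i * 1 :=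
        mul_le_mul_of_nonneg_left (hx i) (hμpos i).le
    _ = μ i := mul_one _
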